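/- Let d ≥ 2 and let ℍ = { u ∈ ℝ^d : u·e₁ > 0 } be the upper half-space, with boundary ∂ℍ = { u : u·e₁ = 0 }. For x ∈ ∂ℍ, a linear isometry A of ℝ^d with Ae₁ = e₁, y ∈ ℍ and z ∈ ℝ^d with z·e₁ < 0, let ḡ_x(A,y,z) denote the unique point of the segment [x+Ay, x+Az] lying on ∂ℍ, namely ḡ_x(A,y,z) = x + Ay + ( (y·e₁)/((y·e₁) − (z·e₁)) ) (Az − Ay). Then for all x, x' ∈ ∂ℍ, all linear isometries A, A' of ℝ^d with Ae₁ = A'e₁ = e₁, all y ∈ ℍ and all z ∈ ℝ^d with z·e₁ < 0: | |ḡ_x(A,y,z) − ḡ_{x'}(A',y,z)| − |x − x'| | ≤ ‖A − A'‖ ( |y| + |z| ). -/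
import Mathlib

open Metric Set
open scoped RealInnerProductSpace

noncomputable section

/-- The first vector of the canonical basis of `ℝ^d`. -/
def e1 (d : ℕ) : EuclideanSpace ℝ (Fin d) :=
  if h : 0 < d then EuclideanSpace.single (⟨0, h⟩ : Fin d) 1 else 0

/-- `ḡ_x(A,y,z)`: the point where the segment `[x+Ay, x+Az]` crosses `∂ℍ`, namely
`x + Ay + ((y·e₁)/((y·e₁) − (z·e₁))) • (Az − Ay)`. -/
def gbar {d : ℕ} (x : EuclideanSpace ℝ (Fin d))
    (A : EuclideanSpace ℝ (Fin d) →ₗᵢ[ℝ] EuclideanSpace ℝ (Fin d))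
    (y z : EuclideanSpace ℝ (Fin d)) : EuclideanSpace ℝ (Fin d) :=
  x + A y + (⟪y, e1 d⟫ / (⟪y, e1 d⟫ - ⟪z, e1 d⟫)) • (A z - A y)

/-- flat half-space estimate: for `x, x' ∈ ∂ℍ`, linear isometries `A, A'` of
`ℝ^d` fixing `e₁`, `y ∈ ℍ` and `z` with `z·e₁ < 0`,
`| |ḡ_x(A,y,z) − ḡ_{x'}(A',y,z)| − |x−x'| | ≤ ‖A−A'‖ (|y| + |z|)`. -/
theorem stmt_8 (d : ℕ) (hd : 2 ≤ d)
    (x x' : EuclideanSpace ℝ (Fin d))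
    (hx : ⟪x, e1 d⟫ = 0) (hx' : ⟪x', e1 d⟫ = 0)
    (A A' : EuclideanSpace ℝ (Fin d) →ₗᵢ[ℝ] EuclideanSpace ℝ (Fin d))
    (hA : A (e1 d) = e1 d) (hA' : A' (e1 d) = e1 d)
    (y z : EuclideanSpace ℝ (Fin d))
    (hy : 0 < ⟪y, e1 d⟫) (hz : ⟪z, e1 d⟫ < 0) :
    |‖gbar x A y z - gbar x' A' y z‖ - ‖x - x'‖|
      ≤ ‖A.toContinuousLinearMap - A'.toContinuousLinearMap‖ * (‖y‖ + ‖z‖) := by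
  set a := ⟪y, e1 d⟫
  set b := ⟪z, e1 d⟫
  have hab : 0 < a - b := by linarith
  set t := a / (a - b) with ht
  have ht0 : 0 ≤ t := div_nonneg hy.le hab.le
  have ht1 : t ≤ 1 := by rw [ht, div_le_one hab]; linarith
  set B := A.toContinuousLinearMap - A'.toContinuousLinearMap with hB
  have hBy : B y = A y - A' y := by
    simp [hB, ContinuousLinearMap.sub_apply]
  have hBz : B z = A z - A' z := by
    simp [hB, ContinuousLinearMap.sub_apply]
  have key : gbar x A y z - gbar x' A' y z
      = (x - x') + ((1 - t) • (B y) + t • (B z)) := by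
    rw [hBy, hBz]
    simp only [gbar]
    module
  have h1 : ‖(1 - t) • (B y) + t • (B z)‖ ≤ ‖B‖ * (‖y‖ + ‖z‖) := by
    calc ‖(1-t) • B y + t • B z‖ ≤ ‖(1-t) • B y‖ + ‖t • B z‖ := norm_add_le _ _
    _ = (1-t) * ‖B y‖ + t * ‖B z‖ := by
        rw [norm_smul, norm_smul, Real.norm_of_nonneg (by linarith), Real.norm_of_nonneg ht0]
    _ ≤ 1 * (‖B‖ * ‖y‖) + 1 * (‖B‖ * ‖z‖) := by
        have h2 := B.le_opNorm y
        have h3 := B.le_opNorm z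
        have h4 : (0:ℝ) ≤ ‖B y‖ := norm_nonneg _
        have h5 : (0:ℝ) ≤ ‖B z‖ := norm_nonneg _
        nlinarith
    _ = ‖B‖ * (‖y‖ + ‖z‖) := by ring
  calc |‖gbar x A y z - gbar x' A' y z‖ - ‖x - x'‖|
      ≤ ‖(gbar x A y z - gbar x' A' y z) - (x - x')‖ := abs_norm_sub_norm_le _ _
    _ = ‖(1 - t) • (B y) + t • (B z)‖ := by rw [key, add_sub_cancel_left]
    _ ≤ _ := h1
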